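/- arXiv:quant-ph/0703213 — 2 statements merged into one kernel-verified Lean document; each statement's English description precedes it below -/
import Mathlib

section
/- Let q be a prime power with characteristic p, and let C ⊆ F_q^{2n} be an F_q-linear code. For vectors u=(a|b) ∈ C and v=(a'|b') ∈ F_q^{2n}, the trace-symplectic product Tr_{q/p}(a'·b − a·b') vanishes for all u ∈ C if and only if the symplectic product a'·b − a·b' vanishes for all u ∈ C. Consequently the trace-symplectic dual of C equals its symplectic dual: C^{⊥_t} = C^{⊥_s}. -/
set_option linter.unusedSectionVars false

open Finset

variable {F : Type*} [Field F] [Fintype F]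

/-- Euclidean dot product. -/
def dotp {ι : Type*} [Fintype ι] (a b : ι → F) : F := ∑ i, a i * b i

/-- Symplectic product of u=(a|b), v=(a'|b'): a'·b − a·b'. -/
def sform {ι : Type*} [Fintype ι] (u v : (ι → F) × (ι → F)) : F :=
  dotp v.1 u.2 - dotp u.1 v.2

lemma dotp_add_right {ι : Type*} [Fintype ι] (a b c : ι → F) :
    dotp a (b + c) = dotp a b + dotp a c := by
  simp [dotp, mul_add, Finset.sum_add_distrib]

lemma dotp_add_left {ι : Type*} [Fintype ι] (a b c : ι → F) :
    dotp (a + b) c = dotp a c + dotp b c := by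
  simp [dotp, add_mul, Finset.sum_add_distrib]

lemma dotp_smul_right {ι : Type*} [Fintype ι] (r : F) (a b : ι → F) :
    dotp a (r • b) = r * dotp a b := by
  simp only [dotp, Pi.smul_apply, smul_eq_mul, Finset.mul_sum]
  exact Finset.sum_congr rfl fun i _ => by ring

lemma dotp_smul_left {ι : Type*} [Fintype ι] (r : F) (a b : ι → F) :
    dotp (r • a) b = r * dotp a b := by
  simp only [dotp, Pi.smul_apply, smul_eq_mul, Finset.mul_sum]
  exact Finset.sum_congr rfl fun i _ => by ring

/-- Euclidean dual of a code. -/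
def eperp {ι : Type*} [Fintype ι] (X : Submodule F (ι → F)) : Submodule F (ι → F) where
  carrier := {y | ∀ x ∈ X, dotp x y = 0}
  add_mem' := by
    intro a b ha hb x hx
    rw [dotp_add_right, ha x hx, hb x hx, add_zero]
  zero_mem' := by intro x hx; simp [dotp]
  smul_mem' := by
    intro r a ha x hx
    rw [dotp_smul_right, ha x hx, mul_zero]

/-- Symplectic dual of a code. -/
def sperp {ι : Type*} [Fintype ι] (C : Submodule F ((ι → F) × (ι → F))) :
    Submodule F ((ι → F) × (ι → F)) where
  carrier := {x | ∀ y ∈ C, sform y x = 0}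
  add_mem' := by
    intro a b ha hb y hy
    have h1 := ha y hy; have h2 := hb y hy
    simp only [sform, Prod.fst_add, Prod.snd_add, dotp_add_left, dotp_add_right] at *
    linear_combination h1 + h2
  zero_mem' := by intro y hy; simp [sform, dotp]
  smul_mem' := by
    intro r a ha y hy
    have h := ha y hy
    simp only [sform, Prod.smul_fst, Prod.smul_snd, dotp_smul_left, dotp_smul_right] at *
    linear_combination r * h

/-- Symplectic weight. -/
def swt {ι : Type*} [Fintype ι] [DecidableEq F] (u : (ι → F) × (ι → F)) : ℕ :=
  (Finset.univ.filter fun i => ¬(u.1 i = 0 ∧ u.2 i = 0)).card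

/-- Tensor product of codes. -/
def tcode {ι κ : Type*} [Fintype ι] [Fintype κ] (A : Submodule F (ι → F))
    (B : Submodule F (κ → F)) : Submodule F (ι × κ → F) :=
  Submodule.span F {w | ∃ a ∈ A, ∃ b ∈ B, w = fun p => a p.1 * b p.2}

lemma trace_mul_all_zero {p : ℕ} [Fact p.Prime] {F : Type*} [Field F] [Fintype F] [CharP F p]
    [Algebra (ZMod p) F] (s : F) (h : ∀ r : F, Algebra.trace (ZMod p) F (r * s) = 0) : s = 0 := by
  have : FiniteDimensional (ZMod p) F := Module.Finite.of_finite
  have hn := traceForm_nondegenerate (ZMod p) F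
  by_contra hs
  exact hs (hn.1 s fun r => by simpa [Algebra.traceForm_apply, mul_comm] using h r)

/-- For an `F_q`-linear code `C ⊆ F_q^{2n}`, the trace-symplectic product of
all elements of `C` with a fixed vector `x` vanishes iff the symplectic product does;
consequently the trace-symplectic dual of `C` equals its symplectic dual. -/
theorem trace_symplectic_dual_eq_symplectic_dual
    {p : ℕ} [Fact p.Prime] {F : Type*} [Field F] [Fintype F] [CharP F p]
    [Algebra (ZMod p) F] {n : ℕ}
    (C : Submodule F ((Fin n → F) × (Fin n → F))) :
    (∀ x : (Fin n → F) × (Fin n → F),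
      ((∀ u ∈ C, Algebra.trace (ZMod p) F (sform u x) = 0) ↔ (∀ u ∈ C, sform u x = 0))) ∧
    {x : (Fin n → F) × (Fin n → F) | ∀ u ∈ C, Algebra.trace (ZMod p) F (sform u x) = 0}
      = (sperp C : Set ((Fin n → F) × (Fin n → F))) := by
  have key : ∀ x : (Fin n → F) × (Fin n → F),
      ((∀ u ∈ C, Algebra.trace (ZMod p) F (sform u x) = 0) ↔ (∀ u ∈ C, sform u x = 0)) := by
    intro x
    constructor
    · intro h u hu
      apply trace_mul_all_zero (p := p)
      intro r
      have hru : r • u ∈ C := C.smul_mem r hu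
      have : sform (r • u) x = r * sform u x := by
        simp [sform, Prod.smul_fst, Prod.smul_snd, dotp_smul_left, dotp_smul_right, mul_sub]
      have := h (r • u) hru
      rwa [‹sform (r • u) x = r * sform u x›] at this
    · intro h u hu
      rw [h u hu, map_zero]
  refine ⟨key, ?_⟩
  ext x
  simp only [Set.mem_setOf_eq, SetLike.mem_coe]
  rw [key x]
  exact Iff.rfl
end

section
/- With C = (F_q^{n_1} ⊗ C_2^⊥) × (C_1^⊥ ⊗ F_q^{n_2}) and C^{⊥_s} = (C_1 ⊗ F_q^{n_2}) × (F_q^{n_1} ⊗ C_2) as above, the intersection D = C ∩ C^{⊥_s} equals (C_1 ⊗ C_2^⊥) × (C_1^⊥ ⊗ C_2), and dim D = k_1(n_2 − k_2) + k_2(n_1 − k_1). Consequently dim C − dim D = 2(n_1−k_1)(n_2−k_2) and dim C^{⊥_s} − dim D = 2 k_1 k_2. -/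
set_option linter.unusedSectionVars false

open Finset

variable {F : Type*} [Field F] [Fintype F]

section Helpers

open Module Submodule

variable {ι κ : Type*} [Fintype ι] [Fintype κ]

/-- The dot product as a bilinear form. -/
def dotForm (ι : Type*) [Fintype ι] : LinearMap.BilinForm F (ι → F) :=
  LinearMap.mk₂ F dotp dotp_add_left
    (fun r a b => by rw [dotp_smul_left]; rfl)
    dotp_add_right (fun r a b => by rw [dotp_smul_right]; rfl)

lemma dotForm_apply (a b : ι → F) : dotForm (F := F) ι a b = dotp a b := rfl

lemma dotForm_nondeg : (dotForm (F := F) ι).Nondegenerate := by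
  classical
  constructor
  all_goals
    intro x hx
    funext i
    have h := hx (Pi.single i 1)
    simpa [dotForm_apply, dotp, Pi.single_apply, mul_ite, ite_mul] using h

lemma dotForm_refl : (dotForm (F := F) ι).IsRefl := by
  intro x y h
  have : dotp y x = dotp x y := Finset.sum_congr rfl fun i _ => mul_comm _ _
  simpa [dotForm_apply, this] using h

lemma eperp_eq_orthogonal (X : Submodule F (ι → F)) :
    eperp X = (dotForm (F := F) ι).orthogonal X := rfl

lemma finrank_eperp (X : Submodule F (ι → F)) :
    Module.finrank F (eperp X) = Fintype.card ι - Module.finrank F X := by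
  rw [eperp_eq_orthogonal,
    LinearMap.BilinForm.finrank_orthogonal dotForm_nondeg X,
    Module.finrank_pi]

/-- Matrices whose rows all lie in `B`. -/
def rowsIn (B : Submodule F (κ → F)) : Submodule F (ι × κ → F) where
  carrier := {w | ∀ i, (fun j => w (i, j)) ∈ B}
  add_mem' := fun ha hb i => B.add_mem (ha i) (hb i)
  zero_mem' := fun _ => B.zero_mem
  smul_mem' := fun r _ hw i => B.smul_mem r (hw i)

/-- Matrices whose columns all lie in `A`. -/
def colsIn (A : Submodule F (ι → F)) : Submodule F (ι × κ → F) where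
  carrier := {w | ∀ j, (fun i => w (i, j)) ∈ A}
  add_mem' := fun ha hb j => A.add_mem (ha j) (hb j)
  zero_mem' := fun _ => A.zero_mem
  smul_mem' := fun r _ hw j => A.smul_mem r (hw j)

lemma mem_rowsIn {B : Submodule F (κ → F)} {w : ι × κ → F} :
    w ∈ rowsIn B ↔ ∀ i, (fun j => w (i, j)) ∈ B := Iff.rfl

lemma mem_colsIn {A : Submodule F (ι → F)} {w : ι × κ → F} :
    w ∈ colsIn A ↔ ∀ j, (fun i => w (i, j)) ∈ A := Iff.rfl

lemma tcode_le {A : Submodule F (ι → F)} {B : Submodule F (κ → F)}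
    {X : Submodule F (ι × κ → F)}
    (h : ∀ a ∈ A, ∀ b ∈ B, (fun p : ι × κ => a p.1 * b p.2) ∈ X) :
    tcode A B ≤ X := by
  rw [tcode, Submodule.span_le]
  rintro w ⟨a, ha, b, hb, rfl⟩
  exact h a ha b hb

lemma mem_tcode {A : Submodule F (ι → F)} {B : Submodule F (κ → F)}
    {a : ι → F} (ha : a ∈ A) {b : κ → F} (hb : b ∈ B) :
    (fun p : ι × κ => a p.1 * b p.2) ∈ tcode A B :=
  Submodule.subset_span ⟨a, ha, b, hb, rfl⟩

lemma tcode_mono {A A' : Submodule F (ι → F)} {B B' : Submodule F (κ → F)}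
    (hA : A ≤ A') (hB : B ≤ B') : tcode A B ≤ tcode A' B' :=
  tcode_le fun _ ha _ hb => mem_tcode (hA ha) (hB hb)

lemma tcode_le_rowsIn (A : Submodule F (ι → F)) (B : Submodule F (κ → F)) :
    tcode A B ≤ rowsIn B :=
  tcode_le fun a _ b hb i => by
    show (fun j => a i * b j) ∈ B
    have h : (fun j => a i * b j) = a i • b := rfl
    rw [h]; exact B.smul_mem _ hb

lemma tcode_le_colsIn (A : Submodule F (ι → F)) (B : Submodule F (κ → F)) :
    tcode A B ≤ colsIn A :=
  tcode_le fun a ha b _ j => by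
    show (fun i => a i * b j) ∈ A
    have h : (fun i => a i * b j) = b j • a := funext fun i => mul_comm _ _
    rw [h]; exact A.smul_mem _ ha

lemma rowsIn_le_tcode_top (B : Submodule F (κ → F)) :
    (rowsIn B : Submodule F (ι × κ → F)) ≤ tcode ⊤ B := by
  classical
  intro w hw
  have hrep : w = ∑ i : ι, (fun p : ι × κ => (Pi.single i (1 : F) : ι → F) p.1 * w (i, p.2)) := by
    funext p
    rw [Finset.sum_apply]
    simp [Pi.single_apply]
  rw [hrep]
  exact Submodule.sum_mem _ fun i _ => mem_tcode Submodule.mem_top (hw i)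

lemma colsIn_le_tcode_top (A : Submodule F (ι → F)) :
    (colsIn A : Submodule F (ι × κ → F)) ≤ tcode A ⊤ := by
  classical
  intro w hw
  have hrep : w = ∑ j : κ, (fun p : ι × κ => w (p.1, j) * (Pi.single j (1 : F) : κ → F) p.2) := by
    funext p
    rw [Finset.sum_apply]
    simp [Pi.single_apply]
  rw [hrep]
  exact Submodule.sum_mem _ fun j _ => mem_tcode (hw j) Submodule.mem_top

lemma tcode_top_right (B : Submodule F (κ → F)) :
    (tcode (⊤ : Submodule F (ι → F)) B) = rowsIn B :=
  le_antisymm (tcode_le_rowsIn _ _) (rowsIn_le_tcode_top _)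

lemma tcode_top_left (A : Submodule F (ι → F)) :
    (tcode A (⊤ : Submodule F (κ → F))) = colsIn A :=
  le_antisymm (tcode_le_colsIn _ _) (colsIn_le_tcode_top _)

lemma colsIn_inf_rowsIn_le (A : Submodule F (ι → F)) (B : Submodule F (κ → F)) :
    colsIn A ⊓ rowsIn B ≤ tcode A B := by
  classical
  rintro w ⟨hc, hr⟩
  obtain ⟨A', hA'⟩ := A.exists_isCompl
  set π := A.projectionOnto A' hA' with hπdef
  set bA := Module.finBasis F A with hbA
  set k := Module.finrank F A with hk
  set φ : Fin k → ((ι → F) →ₗ[F] F) :=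
    fun t => (Finsupp.lapply t).comp ((bA.repr : A ≃ₗ[F] (Fin k →₀ F)).toLinearMap.comp π)
    with hφ
  have hφcol : ∀ (t : Fin k) (x : ι → F) (hx : x ∈ A),
      φ t x = bA.repr ⟨x, hx⟩ t := by
    intro t x hx
    have hπx : π x = ⟨x, hx⟩ := by
      simpa using Submodule.projectionOnto_apply_left hA' ⟨x, hx⟩
    simp [hφ, hπx]
  have hw : w = ∑ t : Fin k,
      (fun p : ι × κ => (bA t : ι → F) p.1 * φ t (fun i => w (i, p.2))) := by
    funext p
    rw [Finset.sum_apply]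
    have hcol : (fun i => w (i, p.2)) ∈ A := hc p.2
    have hsr := congrArg (fun v : A => (A.subtype v) p.1) (bA.sum_repr ⟨_, hcol⟩)
    simp only [map_sum, map_smul, Finset.sum_apply, Pi.smul_apply, smul_eq_mul,
      Submodule.subtype_apply] at hsr
    calc w p = ∑ t : Fin k, bA.repr ⟨_, hcol⟩ t * (bA t : ι → F) p.1 := hsr.symm
      _ = ∑ t : Fin k, (bA t : ι → F) p.1 * φ t (fun i => w (i, p.2)) := by
          refine Finset.sum_congr rfl fun t _ => ?_
          rw [hφcol t _ hcol, mul_comm]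
  have hB : ∀ t : Fin k, (fun j => φ t (fun i => w (i, j))) ∈ B := by
    intro t
    have hdec : (fun j => φ t (fun i => w (i, j)))
        = ∑ i : ι, φ t (Pi.single i 1) • (fun j => w (i, j)) := by
      funext j
      rw [Finset.sum_apply]
      have hx : (fun i => w (i, j)) = ∑ i : ι, (w (i, j) • (Pi.single i (1 : F) : ι → F)) := by
        funext i'
        rw [Finset.sum_apply]
        simp [Pi.single_apply]
      rw [hx, map_sum]
      refine Finset.sum_congr rfl fun i _ => ?_
      rw [map_smul]
      simp [mul_comm]
    rw [hdec]
    exact Submodule.sum_mem _ fun i _ => B.smul_mem _ (hr i)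
  rw [hw]
  exact Submodule.sum_mem _ fun t _ => mem_tcode (bA t).2 (hB t)

lemma tcode_top_inf (A : Submodule F (ι → F)) (B : Submodule F (κ → F)) :
    tcode ⊤ B ⊓ tcode A ⊤ = tcode A B := by
  refine le_antisymm ?_ (le_inf (tcode_mono le_top le_rfl) (tcode_mono le_rfl le_top))
  rw [tcode_top_right, tcode_top_left]
  intro w hw
  exact colsIn_inf_rowsIn_le A B ⟨hw.2, hw.1⟩

lemma mem_decompose {M : Submodule F (ι → F)} {n : ℕ} (b : Basis (Fin n) F M)
    {a : ι → F} (ha : a ∈ M) (i : ι) :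
    a i = ∑ s, b.repr ⟨a, ha⟩ s * (b s : ι → F) i := by
  have h := congrArg (fun v : M => (M.subtype v) i) (b.sum_repr ⟨a, ha⟩)
  simp only [map_sum, map_smul, Finset.sum_apply, Pi.smul_apply, smul_eq_mul,
    Submodule.subtype_apply] at h
  exact h.symm

lemma finrank_tcode (A : Submodule F (ι → F)) (B : Submodule F (κ → F)) :
    Module.finrank F (tcode A B) = Module.finrank F A * Module.finrank F B := by
  classical
  set bA := Module.finBasis F A with hbA
  set bB := Module.finBasis F B with hbB
  set f : Fin (Module.finrank F A) × Fin (Module.finrank F B) → (ι × κ → F) :=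
    fun st => fun p => (bA st.1 : ι → F) p.1 * (bB st.2 : κ → F) p.2 with hf
  have hspan : tcode A B = Submodule.span F (Set.range f) := by
    refine le_antisymm ?_ ?_
    · refine tcode_le fun a ha b hb => ?_
      have key : (fun p : ι × κ => a p.1 * b p.2)
          = ∑ st : Fin (Module.finrank F A) × Fin (Module.finrank F B),
              (bA.repr ⟨a, ha⟩ st.1 * bB.repr ⟨b, hb⟩ st.2) • f st := by
        funext p
        rw [Finset.sum_apply, Fintype.sum_prod_type,
          mem_decompose bA ha p.1, mem_decompose bB hb p.2, Finset.sum_mul_sum]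
        refine Finset.sum_congr rfl fun s _ => Finset.sum_congr rfl fun t _ => ?_
        simp only [Pi.smul_apply, smul_eq_mul, hf]
        ring
      rw [key]
      exact Submodule.sum_mem _ fun st _ =>
        Submodule.smul_mem _ _ (Submodule.subset_span ⟨st, rfl⟩)
    · rw [Submodule.span_le]
      rintro _ ⟨st, rfl⟩
      exact mem_tcode (bA st.1).2 (bB st.2).2
  have liA : LinearIndependent F (fun s => (bA s : ι → F)) :=
    bA.linearIndependent.map' A.subtype (Submodule.ker_subtype A)
  have liB : LinearIndependent F (fun t => (bB t : κ → F)) :=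
    bB.linearIndependent.map' B.subtype (Submodule.ker_subtype B)
  have hli : LinearIndependent F f := by
    rw [Fintype.linearIndependent_iff]
    intro g hg st
    have h1 : ∀ i : ι,
        (∑ t, (∑ s, g (s, t) * (bA s : ι → F) i) • (bB t : κ → F)) = 0 := by
      intro i
      funext j
      have hg' := congrFun hg (i, j)
      simp only [Finset.sum_apply, Pi.smul_apply, smul_eq_mul, Pi.zero_apply, hf,
        Fintype.sum_prod_type] at hg' ⊢
      simp only [Finset.sum_mul]
      rw [Finset.sum_comm, ← hg']
      exact Finset.sum_congr rfl fun s _ => Finset.sum_congr rfl fun t _ => by ring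
    have h2 : ∀ (i : ι) (t : Fin (Module.finrank F B)),
        (∑ s, g (s, t) * (bA s : ι → F) i) = 0 := fun i t =>
      Fintype.linearIndependent_iff.mp liB _ (h1 i) t
    have h3 : (∑ s, g (s, st.2) • (fun i => (bA s : ι → F) i)) = 0 := by
      funext i
      simpa [Finset.sum_apply] using h2 i st.2
    have := Fintype.linearIndependent_iff.mp liA (fun s => g (s, st.2)) (by simpa using h3) st.1
    simpa using this
  rw [hspan, finrank_span_eq_card hli, Fintype.card_prod, Fintype.card_fin, Fintype.card_fin]

/-- Equivalence between a product of submodules and the product type. -/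
def prodSubEquiv {M N : Type*} [AddCommGroup M] [AddCommGroup N] [Module F M] [Module F N]
    (p : Submodule F M) (q : Submodule F N) : ↥(p.prod q) ≃ₗ[F] ↥p × ↥q where
  toFun x := (⟨x.1.1, x.2.1⟩, ⟨x.1.2, x.2.2⟩)
  invFun y := ⟨(y.1.1, y.2.1), ⟨y.1.2, y.2.2⟩⟩
  map_add' _ _ := rfl
  map_smul' _ _ := rfl
  left_inv _ := rfl
  right_inv _ := rfl

lemma finrank_prodSub {M N : Type*} [AddCommGroup M] [AddCommGroup N] [Module F M] [Module F N]
    (p : Submodule F M) (q : Submodule F N)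
    [Module.Finite F p] [Module.Finite F q] :
    Module.finrank F ↥(p.prod q) = Module.finrank F p + Module.finrank F q := by
  rw [(prodSubEquiv p q).finrank_eq, Module.finrank_prod]

end Helpers

/-- with `C = (F_q^{n_1} ⊗ C_2^⊥) × (C_1^⊥ ⊗ F_q^{n_2})` and
`C^{⊥_s} = (C_1 ⊗ F_q^{n_2}) × (F_q^{n_1} ⊗ C_2)`, the intersection
`D = C ∩ C^{⊥_s}` is `(C_1 ⊗ C_2^⊥) × (C_1^⊥ ⊗ C_2)` with
`dim D = k_1(n_2−k_2) + k_2(n_1−k_1)`; hence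
`dim C − dim D = 2(n_1−k_1)(n_2−k_2)` and `dim C^{⊥_s} − dim D = 2 k_1 k_2`. -/
theorem lattice_code_gauge {n1 n2 : ℕ}
    (C1 : Submodule F (Fin n1 → F)) (C2 : Submodule F (Fin n2 → F)) (k1 k2 : ℕ)
    (h1 : Module.finrank F C1 = k1) (h2 : Module.finrank F C2 = k2) :
    ((tcode (⊤ : Submodule F (Fin n1 → F)) (eperp C2)).prod
        (tcode (eperp C1) (⊤ : Submodule F (Fin n2 → F))))
      ⊓ ((tcode C1 (⊤ : Submodule F (Fin n2 → F))).prod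
          (tcode (⊤ : Submodule F (Fin n1 → F)) C2))
      = (tcode C1 (eperp C2)).prod (tcode (eperp C1) C2) ∧
    Module.finrank F ↥((tcode C1 (eperp C2)).prod (tcode (eperp C1) C2))
      = k1 * (n2 - k2) + k2 * (n1 - k1) ∧
    Module.finrank F ↥((tcode (⊤ : Submodule F (Fin n1 → F)) (eperp C2)).prod
        (tcode (eperp C1) (⊤ : Submodule F (Fin n2 → F))))
      = Module.finrank F ↥((tcode C1 (eperp C2)).prod (tcode (eperp C1) C2))
        + 2 * ((n1 - k1) * (n2 - k2)) ∧
    Module.finrank F ↥((tcode C1 (⊤ : Submodule F (Fin n2 → F))).prod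
        (tcode (⊤ : Submodule F (Fin n1 → F)) C2))
      = Module.finrank F ↥((tcode C1 (eperp C2)).prod (tcode (eperp C1) C2))
        + 2 * (k1 * k2) := by
  have hk1 : k1 ≤ n1 := by
    have h := Submodule.finrank_le C1
    rwa [h1, Module.finrank_pi, Fintype.card_fin] at h
  have hk2 : k2 ≤ n2 := by
    have h := Submodule.finrank_le C2
    rwa [h2, Module.finrank_pi, Fintype.card_fin] at h
  obtain ⟨a, rfl⟩ := Nat.exists_eq_add_of_le hk1
  obtain ⟨b, rfl⟩ := Nat.exists_eq_add_of_le hk2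
  have hs1 : k1 + a - k1 = a := Nat.add_sub_cancel_left k1 a
  have hs2 : k2 + b - k2 = b := Nat.add_sub_cancel_left k2 b
  have hD : Module.finrank F ↥((tcode C1 (eperp C2)).prod (tcode (eperp C1) C2))
      = k1 * b + a * k2 := by
    rw [finrank_prodSub, finrank_tcode, finrank_tcode, finrank_eperp, finrank_eperp,
      Fintype.card_fin, Fintype.card_fin, h1, h2, hs1, hs2]
  have hC : Module.finrank F ↥((tcode (⊤ : Submodule F (Fin (k1 + a) → F)) (eperp C2)).prod
        (tcode (eperp C1) (⊤ : Submodule F (Fin (k2 + b) → F))))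
      = (k1 + a) * b + a * (k2 + b) := by
    rw [finrank_prodSub, finrank_tcode, finrank_tcode, finrank_eperp, finrank_eperp,
      Fintype.card_fin, Fintype.card_fin, h1, h2, hs1, hs2, finrank_top, finrank_top,
      Module.finrank_pi, Module.finrank_pi, Fintype.card_fin, Fintype.card_fin]
  have hCs : Module.finrank F ↥((tcode C1 (⊤ : Submodule F (Fin (k2 + b) → F))).prod
        (tcode (⊤ : Submodule F (Fin (k1 + a) → F)) C2))
      = k1 * (k2 + b) + (k1 + a) * k2 := by
    rw [finrank_prodSub, finrank_tcode, finrank_tcode, h1, h2, finrank_top, finrank_top,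
      Module.finrank_pi, Module.finrank_pi, Fintype.card_fin, Fintype.card_fin]
  refine ⟨?_, ?_, ?_, ?_⟩
  · rw [Submodule.prod_inf_prod, tcode_top_inf C1 (eperp C2)]
    congr 1
    rw [inf_comm]
    exact tcode_top_inf (eperp C1) C2
  · rw [hD, hs1, hs2]; ring
  · rw [hC, hD, hs1, hs2]; ring
  · rw [hCs, hD]; ring
end
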